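/- Let $G(k)$ be the graph obtained from a graph $G$ on $n$ vertices by attaching $k$ new pendant vertices to each vertex of $G$ (with unit edge weights). Then the monomer-dimer partition functions satisfy $Z_M(G(k),\lambda) = \lambda^{nk} Z_M(G, \lambda + k/\lambda)$ for all real $\lambda > 0$. -/

import Mathlib

/-- Boolean adjacency for the graph `G(k)` obtained from `G` by attaching `k` new
pendant vertices to each vertex of `G`. -/
def pendantAdjB {V : Type*} [DecidableEq V] (G : SimpleGraph V) [DecidableRel G.Adj]
    (k : ℕ) : V ⊕ V × Fin k → V ⊕ V × Fin k → Bool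
  | Sum.inl u, Sum.inl v => decide (G.Adj u v)
  | Sum.inl v, Sum.inr (w, _) => decide (v = w)
  | Sum.inr (w, _), Sum.inl v => decide (v = w)
  | Sum.inr _, Sum.inr _ => false

/-- The graph `G(k)`: `G` with `k` new pendant vertices attached to each vertex. -/
def pendant {V : Type*} [DecidableEq V] (G : SimpleGraph V) [DecidableRel G.Adj]
    (k : ℕ) : SimpleGraph (V ⊕ V × Fin k) where
  Adj a b := pendantAdjB G k a b = true
  symm := by
    constructor
    intro a b h
    rcases a with u | ⟨u, i⟩ <;> rcases b with v | ⟨v, j⟩ <;>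
      simp_all [pendantAdjB, eq_comm, G.adj_comm]
  loopless := by
    constructor
    intro a
    rcases a with u | ⟨u, i⟩ <;> simp [pendantAdjB]

instance {V : Type*} [DecidableEq V] (G : SimpleGraph V) [DecidableRel G.Adj]
    (k : ℕ) : DecidableRel (pendant G k).Adj := fun _ _ =>
  inferInstanceAs (Decidable (_ = true))

/-- `M` is a matching of `G`: a set of edges of `G`, pairwise vertex-disjoint. -/
def IsMatchingSet {V : Type*} [Fintype V] [DecidableEq V] (G : SimpleGraph V)
    [DecidableRel G.Adj] (M : Finset (Sym2 V)) : Prop :=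
  M ⊆ G.edgeFinset ∧
    ∀ e ∈ M, ∀ f ∈ M, e ≠ f → ∀ v : V, ¬(v ∈ e ∧ v ∈ f)

instance {V : Type*} [Fintype V] [DecidableEq V] (G : SimpleGraph V)
    [DecidableRel G.Adj] : DecidablePred (IsMatchingSet G) := fun _ =>
  inferInstanceAs (Decidable (_ ∧ _))

/-- Monomer-dimer partition function with unit edge weights:
`Z_M(G, λ) = ∑_{matchings M} λ^{u(M)}` where `u(M)` is the number of uncovered
vertices. -/
noncomputable def matchZ {V : Type*} [Fintype V] [DecidableEq V]
    (G : SimpleGraph V) [DecidableRel G.Adj] (lam : ℝ) : ℝ :=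
  ∑ M ∈ Finset.univ.filter (IsMatchingSet G),
      lam ^ (Fintype.card V - 2 * M.card)

section Aux

open Finset

variable {V : Type*} [Fintype V] [DecidableEq V]

/-- Vertices uncovered by a set of edges. -/
def uncov (M : Finset (Sym2 V)) : Finset V :=
  Finset.univ.filter fun v => ∀ e ∈ M, v ∉ e

lemma mem_uncov {M : Finset (Sym2 V)} {v : V} : v ∈ uncov M ↔ ∀ e ∈ M, v ∉ e := by
  simp [uncov]

/-- Vertices covered by a set of edges. -/
def cov (M : Finset (Sym2 V)) : Finset V :=
  M.biUnion fun e => Finset.univ.filter (· ∈ e)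

lemma uncov_eq_compl (M : Finset (Sym2 V)) : uncov M = (cov M)ᶜ := by
  ext v
  simp [uncov, cov]

lemma card_cov {G : SimpleGraph V} [DecidableRel G.Adj] {M : Finset (Sym2 V)}
    (hM : IsMatchingSet G M) : (cov M).card = 2 * M.card := by
  rw [cov, card_biUnion]
  · rw [Finset.sum_congr rfl (fun e he => ?_), Finset.sum_const, smul_eq_mul, mul_comm]
    have hne : ¬ e.IsDiag := by
      have h1 := hM.1 he
      rw [SimpleGraph.mem_edgeFinset] at h1
      exact G.not_isDiag_of_mem_edgeSet h1
    induction e using Sym2.ind with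
    | _ a b =>
      have hab : a ≠ b := by simpa [Sym2.mk_isDiag_iff] using hne
      have h2 : Finset.univ.filter (· ∈ (s(a, b) : Sym2 V)) = {a, b} := by
        ext u; simp [Sym2.mem_iff]
      rw [h2, card_pair hab]
  · intro e he f hf hef
    simp only [Function.onFun]
    rw [Finset.disjoint_left]
    intro v hv1 hv2
    rw [mem_filter] at hv1 hv2
    exact hM.2 e he f hf hef v ⟨hv1.2, hv2.2⟩

lemma card_uncov {G : SimpleGraph V} [DecidableRel G.Adj] {M : Finset (Sym2 V)}
    (hM : IsMatchingSet G M) : (uncov M).card = Fintype.card V - 2 * M.card := by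
  rw [uncov_eq_compl, card_compl, card_cov hM]

lemma two_mul_card_le {G : SimpleGraph V} [DecidableRel G.Adj] {M : Finset (Sym2 V)}
    (hM : IsMatchingSet G M) : 2 * M.card ≤ Fintype.card V := by
  rw [← card_cov hM]; exact card_le_univ _

def pendSet (k : ℕ) (U : Finset V) (p : ∀ a ∈ U, Option (Fin k)) :
    Finset (Sym2 (V ⊕ V × Fin k)) :=
  U.attach.biUnion fun v =>
    (p v.1 v.2).elim ∅ fun i => {s(Sum.inl v.1, Sum.inr (v.1, i))}

lemma mem_pendSet {k : ℕ} {U : Finset V} {p : ∀ a ∈ U, Option (Fin k)}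
    {e : Sym2 (V ⊕ V × Fin k)} :
    e ∈ pendSet k U p ↔
      ∃ v, ∃ hv : v ∈ U, ∃ i, p v hv = some i ∧ e = s(Sum.inl v, Sum.inr (v, i)) := by
  simp only [pendSet, mem_biUnion, mem_attach, true_and, Subtype.exists]
  constructor
  · rintro ⟨v, hv, he⟩
    cases hp : p v hv with
    | none => rw [hp] at he; simp at he
    | some i =>
      rw [hp] at he; simp only [Option.elim, Finset.mem_singleton] at he
      exact ⟨v, hv, i, hp, he⟩
  · rintro ⟨v, hv, i, hp, rfl⟩
    exact ⟨v, hv, by rw [hp]; simp⟩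

lemma pend_eq_iff {k : ℕ} {v v' : V} {i i' : Fin k} :
    (s(Sum.inl v, Sum.inr (v, i)) : Sym2 (V ⊕ V × Fin k)) =
      s(Sum.inl v', Sum.inr (v', i')) ↔ v = v' ∧ i = i' := by
  rw [Sym2.eq_iff]
  constructor
  · rintro (⟨h1, h2⟩ | ⟨h1, h2⟩)
    · cases h1
      exact ⟨rfl, (Prod.mk.injEq .. ▸ Sum.inr.inj h2).2⟩
    · exact absurd h1 (by simp)
  · rintro ⟨rfl, rfl⟩
    exact Or.inl ⟨rfl, rfl⟩

lemma inr_not_mem_map_inl {k : ℕ} {e : Sym2 V} {x : V × Fin k} :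
    Sum.inr x ∉ e.map Sum.inl := by
  simp [Sym2.mem_map]

lemma inl_mem_map_inl {k : ℕ} {e : Sym2 V} {v : V} :
    (Sum.inl v : V ⊕ V × Fin k) ∈ e.map Sum.inl ↔ v ∈ e := by
  simp [Sym2.mem_map]

def toMatch (k : ℕ) (M : Finset (Sym2 V)) (p : ∀ a ∈ uncov M, Option (Fin k)) :
    Finset (Sym2 (V ⊕ V × Fin k)) :=
  M.image (Sym2.map Sum.inl) ∪ pendSet k (uncov M) p

lemma mem_toMatch {k : ℕ} {M : Finset (Sym2 V)} {p : ∀ a ∈ uncov M, Option (Fin k)}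
    {e : Sym2 (V ⊕ V × Fin k)} :
    e ∈ toMatch k M p ↔ (∃ f ∈ M, Sym2.map Sum.inl f = e) ∨
      ∃ v, ∃ hv : v ∈ uncov M, ∃ i, p v hv = some i ∧ e = s(Sum.inl v, Sum.inr (v, i)) := by
  rw [toMatch, mem_union, mem_image, mem_pendSet]

def core (k : ℕ) (M' : Finset (Sym2 (V ⊕ V × Fin k))) : Finset (Sym2 V) :=
  Finset.univ.filter fun e => Sym2.map Sum.inl e ∈ M'

lemma mem_core {k : ℕ} {M' : Finset (Sym2 (V ⊕ V × Fin k))} {e : Sym2 V} :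
    e ∈ core k M' ↔ Sym2.map Sum.inl e ∈ M' := by simp [core]

noncomputable def sel (k : ℕ) (M' : Finset (Sym2 (V ⊕ V × Fin k))) (v : V) : Option (Fin k) :=
  if h : ∃ i : Fin k, s(Sum.inl v, Sum.inr (v, i)) ∈ M' then some h.choose else none

lemma core_toMatch (k : ℕ) (M : Finset (Sym2 V)) (p : ∀ a ∈ uncov M, Option (Fin k)) :
    core k (toMatch k M p) = M := by
  ext e
  rw [mem_core, mem_toMatch]
  constructor
  · rintro (⟨f, hf, hfe⟩ | ⟨v, hv, i, hp, he⟩)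
    · rwa [← Sym2.map.injective Sum.inl_injective hfe]
    · exact absurd (he ▸ (by simp : Sum.inr (v, i) ∈ (s(Sum.inl v, Sum.inr (v, i)) : Sym2 (V ⊕ V × Fin k)))) inr_not_mem_map_inl
  · intro he; exact Or.inl ⟨e, he, rfl⟩

lemma sel_toMatch {k : ℕ} {M : Finset (Sym2 V)} {p : ∀ a ∈ uncov M, Option (Fin k)}
    (v : V) (hv : v ∈ uncov M) : sel k (toMatch k M p) v = p v hv := by
  cases hp : p v hv with
  | none =>
    rw [sel, dif_neg]
    rintro ⟨i, hi⟩
    rw [mem_toMatch] at hi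
    rcases hi with ⟨f, hf, hfe⟩ | ⟨v', hv', i', hp', he⟩
    · refine absurd ?_ (inr_not_mem_map_inl (x := (v, i)) (e := f))
      rw [hfe]; simp
    · obtain ⟨rfl, rfl⟩ := pend_eq_iff.mp he
      have h2 : p v hv = some i := hp'
      rw [hp] at h2
      cases h2
  | some i =>
    have hmem : s(Sum.inl v, Sum.inr (v, i)) ∈ toMatch k M p :=
      mem_toMatch.mpr (Or.inr ⟨v, hv, i, hp, rfl⟩)
    have hex : ∃ j : Fin k, s(Sum.inl v, Sum.inr (v, j)) ∈ toMatch k M p := ⟨i, hmem⟩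
    rw [sel, dif_pos hex]
    have hspec := hex.choose_spec
    rw [mem_toMatch] at hspec
    rcases hspec with ⟨f, hf, hfe⟩ | ⟨v', hv', i', hp', he⟩
    · refine absurd ?_ (inr_not_mem_map_inl (x := (v, hex.choose)) (e := f))
      rw [hfe]; simp
    · obtain ⟨h1, h2⟩ := pend_eq_iff.mp he
      subst h1
      have h3 : p v hv = some i' := hp'
      rw [hp] at h3
      rw [h2, ← Option.some.inj h3]

lemma card_toMatch (k : ℕ) (M : Finset (Sym2 V)) (p : ∀ a ∈ uncov M, Option (Fin k)) :
    (toMatch k M p).card =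
      M.card + ((uncov M).attach.filter fun v => (p v.1 v.2).isSome).card := by
  rw [toMatch, card_union_of_disjoint, card_image_of_injective _ (Sym2.map.injective Sum.inl_injective)]
  · congr 1
    rw [pendSet, card_biUnion]
    · rw [Finset.card_filter]
      refine Finset.sum_congr rfl fun v _ => ?_
      cases hp : p v.1 v.2 <;> simp [hp]
    · intro a _ b _ hab
      simp only [Function.onFun]
      rw [Finset.disjoint_left]
      intro e hea heb
      refine absurd ?_ hab
      cases hpa : p a.1 a.2 with
      | none => rw [hpa] at hea; simp at hea
      | some i =>
        cases hpb : p b.1 b.2 with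
        | none => rw [hpb] at heb; simp at heb
        | some j =>
          rw [hpa] at hea; rw [hpb] at heb
          simp only [Option.elim, Finset.mem_singleton] at hea heb
          exact Subtype.ext (pend_eq_iff.mp (hea.symm.trans heb)).1
  · rw [Finset.disjoint_left]
    intro e he1 he2
    obtain ⟨f, hf, rfl⟩ := mem_image.mp he1
    obtain ⟨v, hv, i, hp, heq⟩ := mem_pendSet.mp he2
    refine absurd ?_ (inr_not_mem_map_inl (x := (v, i)) (e := f))
    rw [heq]; simp

lemma heq_pi {β : Type*} {U U' : Finset V} (h : U = U') (p : ∀ a ∈ U, β) (q : ∀ a ∈ U', β)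
    (hpq : ∀ a ha ha', p a ha = q a ha') : HEq p q := by
  subst h
  exact heq_of_eq (funext fun a => funext fun ha => hpq a ha ha)

variable {G : SimpleGraph V} [DecidableRel G.Adj]

lemma toMatch_isMatching {k : ℕ} {M : Finset (Sym2 V)} (hM : IsMatchingSet G M)
    (p : ∀ a ∈ uncov M, Option (Fin k)) :
    IsMatchingSet (pendant G k) (toMatch k M p) := by
  constructor
  · intro e he
    rw [SimpleGraph.mem_edgeFinset]
    rw [mem_toMatch] at he
    rcases he with ⟨f, hf, rfl⟩ | ⟨v, hv, i, hp, rfl⟩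
    · induction f using Sym2.ind with
      | _ a b =>
        rw [Sym2.map_pair_eq, SimpleGraph.mem_edgeSet]
        have hadj : G.Adj a b := by
          have h1 := hM.1 hf
          rwa [SimpleGraph.mem_edgeFinset, SimpleGraph.mem_edgeSet] at h1
        show pendantAdjB G k _ _ = true
        simpa [pendantAdjB]
    · rw [SimpleGraph.mem_edgeSet]
      show pendantAdjB G k _ _ = true
      simp [pendantAdjB]
  · rintro e he f hf hef w ⟨hwe, hwf⟩
    rw [mem_toMatch] at he hf
    rcases he with ⟨a, ha, rfl⟩ | ⟨v, hv, i, hp, rfl⟩ <;>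
      rcases hf with ⟨b, hb, rfl⟩ | ⟨v', hv', i', hp', rfl⟩
    · obtain ⟨x, hx, rfl⟩ := Sym2.mem_map.mp hwe
      obtain ⟨y, hy, hxy⟩ := Sym2.mem_map.mp hwf
      cases Sum.inl.inj hxy
      exact hM.2 a ha b hb (fun h => hef (by rw [h])) x ⟨hx, hy⟩
    · rcases Sym2.mem_iff.mp hwf with rfl | rfl
      · rw [inl_mem_map_inl] at hwe
        exact (mem_uncov.mp hv') a ha hwe
      · exact inr_not_mem_map_inl hwe
    · rcases Sym2.mem_iff.mp hwe with rfl | rfl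
      · rw [inl_mem_map_inl] at hwf
        exact (mem_uncov.mp hv) b hb hwf
      · exact inr_not_mem_map_inl hwf
    · have hvv : v = v' := by
        rcases Sym2.mem_iff.mp hwe with rfl | rfl <;>
          rcases Sym2.mem_iff.mp hwf with h | h
        · exact Sum.inl.inj h
        · exact absurd h (by simp)
        · exact absurd h (by simp)
        · exact ((Prod.mk.injEq .. ▸ Sum.inr.inj h) : v = v' ∧ i = i').1
      subst hvv
      have h3 : p v hv = some i' := hp'
      rw [hp] at h3
      cases Option.some.inj h3
      exact hef rfl

lemma core_isMatching {k : ℕ} {M' : Finset (Sym2 (V ⊕ V × Fin k))}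
    (hM' : IsMatchingSet (pendant G k) M') : IsMatchingSet G (core k M') := by
  constructor
  · intro e he
    rw [mem_core] at he
    have h1 := hM'.1 he
    induction e using Sym2.ind with
    | _ a b =>
      rw [Sym2.map_pair_eq, SimpleGraph.mem_edgeFinset, SimpleGraph.mem_edgeSet] at h1
      rw [SimpleGraph.mem_edgeFinset, SimpleGraph.mem_edgeSet]
      have h2 : pendantAdjB G k (Sum.inl a) (Sum.inl b) = true := h1
      simpa [pendantAdjB] using h2
  · rintro e he f hf hef v ⟨hve, hvf⟩
    rw [mem_core] at he hf
    refine hM'.2 _ he _ hf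
      (fun h => hef (Sym2.map.injective Sum.inl_injective h)) (Sum.inl v) ⟨?_, ?_⟩ <;>
      rwa [inl_mem_map_inl]

lemma pendant_edge {k : ℕ} {e : Sym2 (V ⊕ V × Fin k)} (he : e ∈ (pendant G k).edgeSet) :
    (∃ f : Sym2 V, f ∈ G.edgeSet ∧ e = Sym2.map Sum.inl f) ∨
      ∃ v i, e = s(Sum.inl v, Sum.inr (v, i)) := by
  induction e using Sym2.ind with
  | _ a b =>
    rw [SimpleGraph.mem_edgeSet] at he
    rcases a with u | ⟨u, i⟩ <;> rcases b with w | ⟨w, j⟩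
    · left
      refine ⟨s(u, w), ?_, by rw [Sym2.map_pair_eq]⟩
      have h1 : pendantAdjB G k (Sum.inl u) (Sum.inl w) = true := he
      rw [SimpleGraph.mem_edgeSet]
      simpa [pendantAdjB] using h1
    · right
      have h1 : pendantAdjB G k (Sum.inl u) (Sum.inr (w, j)) = true := he
      have h2 : u = w := by simpa [pendantAdjB] using h1
      subst h2
      exact ⟨u, j, rfl⟩
    · right
      have h1 : pendantAdjB G k (Sum.inr (u, i)) (Sum.inl w) = true := he
      have h2 : w = u := by simpa [pendantAdjB] using h1
      subst h2
      exact ⟨w, i, Sym2.eq_swap⟩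
    · have h1 : pendantAdjB G k (Sum.inr (u, i)) (Sum.inr (w, j)) = true := he
      simp [pendantAdjB] at h1

lemma toMatch_core {k : ℕ} {M' : Finset (Sym2 (V ⊕ V × Fin k))}
    (hM' : IsMatchingSet (pendant G k) M') :
    toMatch k (core k M') (fun v _ => sel k M' v) = M' := by
  ext e
  rw [mem_toMatch]
  constructor
  · rintro (⟨f, hf, rfl⟩ | ⟨v, hv, i, hp, rfl⟩)
    · exact mem_core.mp hf
    · rw [sel] at hp
      split_ifs at hp with h
      have h2 : h.choose = i := Option.some.inj hp
      exact h2 ▸ h.choose_spec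
  · intro he
    have hedge : e ∈ (pendant G k).edgeSet := by
      have h1 := hM'.1 he
      rwa [SimpleGraph.mem_edgeFinset] at h1
    rcases pendant_edge hedge with ⟨f, hf, rfl⟩ | ⟨v, i, rfl⟩
    · exact Or.inl ⟨f, mem_core.mpr he, rfl⟩
    · refine Or.inr ⟨v, ?_, i, ?_, rfl⟩
      · rw [mem_uncov]
        intro f hf hvf
        rw [mem_core] at hf
        have h1 : (Sum.inl v : V ⊕ V × Fin k) ∈ Sym2.map Sum.inl f := inl_mem_map_inl.mpr hvf
        have hne : (s(Sum.inl v, Sum.inr (v, i)) : Sym2 (V ⊕ V × Fin k)) ≠ Sym2.map Sum.inl f := by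
          intro h
          refine absurd ?_ (inr_not_mem_map_inl (x := (v, i)) (e := f))
          rw [← h]; simp
        exact hM'.2 _ he _ hf hne (Sum.inl v) ⟨by simp, h1⟩
      · have hex : ∃ j : Fin k, s(Sum.inl v, Sum.inr (v, j)) ∈ M' := ⟨i, he⟩
        show sel k M' v = some i
        rw [sel, dif_pos hex]
        congr 1
        by_contra hne
        have h1 := hex.choose_spec
        have hne2 : (s(Sum.inl v, Sum.inr (v, hex.choose)) : Sym2 (V ⊕ V × Fin k)) ≠
            s(Sum.inl v, Sum.inr (v, i)) := by
          intro h
          exact hne (pend_eq_iff.mp h).2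
        exact hM'.2 _ h1 _ he hne2 (Sum.inl v) ⟨by simp, by simp⟩

end Aux
theorem stmt_18 {V : Type*} [Fintype V] [DecidableEq V] (G : SimpleGraph V)
    [DecidableRel G.Adj] (k : ℕ) (lam : ℝ) (hlam : 0 < lam) :
    matchZ (pendant G k) lam =
      lam ^ (Fintype.card V * k) * matchZ G (lam + (k : ℝ) / lam) := by
  classical
  have hlam0 : lam ≠ 0 := ne_of_gt hlam
  set w : Option (Fin k) → ℝ := fun o => o.elim lam fun _ => lam⁻¹ with hw
  have hsum : ∑ o : Option (Fin k), w o = lam + (k : ℝ) / lam := by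
    rw [Fintype.sum_option]
    simp [hw, div_eq_mul_inv, mul_comm]
  rw [matchZ, matchZ, Finset.mul_sum]
  have hRHS : ∑ M ∈ Finset.univ.filter (IsMatchingSet G),
      lam ^ (Fintype.card V * k) * (lam + (k : ℝ) / lam) ^ (Fintype.card V - 2 * M.card)
      = ∑ x ∈ (Finset.univ.filter (IsMatchingSet G)).sigma
          (fun M => (uncov M).pi fun _ => (Finset.univ : Finset (Option (Fin k)))),
          lam ^ (Fintype.card V * k) * ∏ v ∈ (uncov x.1).attach, w (x.2 v.1 v.2) := by
    rw [Finset.sum_sigma]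
    refine Finset.sum_congr rfl fun M hM => ?_
    have hMm : IsMatchingSet G M := (Finset.mem_filter.mp hM).2
    rw [← Finset.mul_sum]
    congr 1
    calc (lam + (k : ℝ) / lam) ^ (Fintype.card V - 2 * M.card)
        = (lam + (k : ℝ) / lam) ^ (uncov M).card := by rw [card_uncov hMm]
      _ = ∏ _v ∈ uncov M, ∑ o ∈ (Finset.univ : Finset (Option (Fin k))), w o := by
          rw [Finset.prod_const, hsum]
      _ = ∑ p ∈ (uncov M).pi (fun _ => (Finset.univ : Finset (Option (Fin k)))),
            ∏ x ∈ (uncov M).attach, w (p x.1 x.2) :=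
          Finset.prod_sum (uncov M) (fun _ => Finset.univ) (fun _ o => w o)
  rw [hRHS]
  symm
  refine Finset.sum_nbij' (fun x => toMatch k x.1 x.2)
    (fun M' => ⟨core k M', fun v _ => sel k M' v⟩) ?_ ?_ ?_ ?_ ?_
  · rintro ⟨M, p⟩ hx
    rw [Finset.mem_sigma] at hx
    exact Finset.mem_filter.mpr ⟨Finset.mem_univ _,
      toMatch_isMatching (Finset.mem_filter.mp hx.1).2 p⟩
  · intro M' hM'
    have h := (Finset.mem_filter.mp hM').2
    rw [Finset.mem_sigma]
    exact ⟨Finset.mem_filter.mpr ⟨Finset.mem_univ _, core_isMatching h⟩,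
      Finset.mem_pi.mpr fun a ha => Finset.mem_univ _⟩
  · rintro ⟨M, p⟩ hx
    exact Sigma.ext (core_toMatch k M p)
      (heq_pi (congrArg uncov (core_toMatch k M p)) _ _ (fun v ha ha' => sel_toMatch v ha'))
  · intro M' hM'
    exact toMatch_core (Finset.mem_filter.mp hM').2
  · rintro ⟨M, p⟩ hx
    rw [Finset.mem_sigma] at hx
    have hMm : IsMatchingSet G M := (Finset.mem_filter.mp hx.1).2
    have hU : (uncov M).card = Fintype.card V - 2 * M.card := card_uncov hMm
    have hle : 2 * M.card ≤ Fintype.card V := two_mul_card_le hMm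
    set t := ((uncov M).attach.filter fun v => (p v.1 v.2).isSome).card with ht
    have htU : t ≤ (uncov M).card :=
      (Finset.card_filter_le _ _).trans Finset.card_attach.le
    have htk : t ≤ Fintype.card V * k := by
      rcases Nat.eq_zero_or_pos k with hk | hk
      · subst hk
        have h0 : t = 0 := by
          rw [ht, Finset.card_eq_zero, Finset.filter_eq_empty_iff]
          intro v _
          cases hp : p v.1 v.2 with
          | none => simp [hp]
          | some i => exact i.elim0
        omega
      · calc t ≤ (uncov M).card := htU
          _ ≤ Fintype.card V := Finset.card_le_univ _
          _ ≤ Fintype.card V * k := Nat.le_mul_of_pos_right _ hk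
    have hcardW : Fintype.card (V ⊕ V × Fin k) = Fintype.card V + Fintype.card V * k := by
      simp [Fintype.card_sum, Fintype.card_prod]
    have hprod : ∏ v ∈ (uncov M).attach, w (p v.1 v.2)
        = lam⁻¹ ^ t * lam ^ ((uncov M).card - t) := by
      rw [← Finset.prod_filter_mul_prod_filter_not (uncov M).attach
        (fun v => (p v.1 v.2).isSome)]
      have h1 : ∏ v ∈ (uncov M).attach.filter (fun v => (p v.1 v.2).isSome),
          w (p v.1 v.2) = lam⁻¹ ^ t := by
        rw [ht, ← Finset.prod_const]
        refine Finset.prod_congr rfl fun v hv => ?_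
        obtain ⟨-, h2⟩ := Finset.mem_filter.mp hv
        cases hp : p v.1 v.2 with
        | none => rw [hp] at h2; cases h2
        | some i => simp [hw, hp]
      have hc : ((uncov M).attach.filter (fun v => ¬ (p v.1 v.2).isSome)).card
          = (uncov M).card - t := by
        have h3 := Finset.card_filter_add_card_filter_not
          (s := (uncov M).attach) (p := fun v => (p v.1 v.2).isSome)
        rw [Finset.card_attach] at h3
        omega
      have h2 : ∏ v ∈ (uncov M).attach.filter (fun v => ¬ (p v.1 v.2).isSome),
          w (p v.1 v.2) = lam ^ ((uncov M).card - t) := by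
        rw [← hc, ← Finset.prod_const]
        refine Finset.prod_congr rfl fun v hv => ?_
        obtain ⟨-, h2⟩ := Finset.mem_filter.mp hv
        cases hp : p v.1 v.2 with
        | none => simp [hw, hp]
        | some i => rw [hp] at h2; simp at h2
      rw [h1, h2]
    have key : (Fintype.card (V ⊕ V × Fin k) - 2 * (M.card + t)) + t
        = Fintype.card V * k + ((uncov M).card - t) := by
      rw [hcardW]; omega
    show lam ^ (Fintype.card V * k) * ∏ v ∈ (uncov M).attach, w (p v.1 v.2)
      = lam ^ (Fintype.card (V ⊕ V × Fin k) - 2 * (toMatch k M p).card)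
    rw [hprod, card_toMatch, ← ht]
    calc lam ^ (Fintype.card V * k) * (lam⁻¹ ^ t * lam ^ ((uncov M).card - t))
        = (lam ^ (Fintype.card V * k + ((uncov M).card - t))) * (lam ^ t)⁻¹ := by
          rw [pow_add, inv_pow]; ring
      _ = (lam ^ ((Fintype.card (V ⊕ V × Fin k) - 2 * (M.card + t)) + t)) * (lam ^ t)⁻¹ := by
          rw [key]
      _ = lam ^ (Fintype.card (V ⊕ V × Fin k) - 2 * (M.card + t)) := by
          rw [pow_add]
          field_simp
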